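/- Let S be a finite set of strings of length two over an alphabet of symbols, let t be a nonnegative integer, and let C = {c : the string cc belongs to S}. For each c ∈ C introduce two fresh symbols c₁ and c₂ (distinct from all existing symbols and from each other), and define f_i(c) = c_i if c ∈ C and f_i(c) = c otherwise, for i ∈ {1,2}. Let S' = { f₁(u)f₂(v) : uv ∈ S }. Then S has a common supersequence of length at most t if and only if S' has a common supersequence of length at most t. (In particular, every string in S' consists of two distinct symbols.) -/

import Mathlib

/-- The relabeling map of the 2SCS → 2DistinctSCS reduction: for a symbol `c` with
`cc ∈ S`, the first (`i = false`) and second (`i = true`) occurrences are replaced by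
fresh symbols `c₁ = Sum.inr (false, c)` and `c₂ = Sum.inr (true, c)`; other symbols are
kept as `Sum.inl c`. -/
def distinctify {σ : Type*} [DecidableEq σ] (S : Finset (σ × σ)) (i : Bool) (c : σ) :
    σ ⊕ Bool × σ :=
  if (c, c) ∈ S then Sum.inr (i, c) else Sum.inl c

/-- Relabel a word: the first occurrence of a symbol `c` with `cc ∈ S` becomes `c₁`,
later occurrences become `c₂`; other symbols become `Sum.inl c`. -/
def relabel {σ : Type*} [DecidableEq σ] (S : Finset (σ × σ)) :
    List σ → Finset σ → List (σ ⊕ Bool × σ)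
  | [], _ => []
  | c :: w, seen =>
      (if (c, c) ∈ S then Sum.inr (decide (c ∈ seen), c) else Sum.inl c) ::
        relabel S w (insert c seen)

lemma relabel_length {σ : Type*} [DecidableEq σ] (S : Finset (σ × σ)) :
    ∀ (w : List σ) (seen : Finset σ), (relabel S w seen).length = w.length := by
  intro w
  induction w with
  | nil => intro seen; rfl
  | cons c w ih => intro seen; simp [relabel, ih]

lemma memB {σ : Type*} [DecidableEq σ] (S : Finset (σ × σ)) :
    ∀ (w : List σ) (seen : Finset σ) (v : σ), v ∈ w →
      ((v, v) ∈ S → v ∈ seen ∨ [v, v].Sublist w) →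
      distinctify S true v ∈ relabel S w seen := by
  intro w
  induction w with
  | nil => intro seen v hv; simp at hv
  | cons c w ih =>
    intro seen v hv hvv
    by_cases hcv : c = v
    · subst hcv
      by_cases hC : (c, c) ∈ S
      · rcases hvv hC with hseen | hsub
        · simp [relabel, if_pos hC, decide_eq_true hseen, distinctify, hC]
        · -- [c,c] <+ c :: w, so c ∈ w
          have hcw : c ∈ w := by
            cases hsub with
            | cons _ h => exact (List.cons_subset.mp h.subset).1
            | cons_cons _ h => exact h.subset (by simp)
          have := ih (insert c seen) c hcw (fun _ => Or.inl (Finset.mem_insert_self c seen))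
          simp [relabel, this]
      · simp [relabel, if_neg hC, distinctify, hC]
    · have hvw : v ∈ w := by
        rcases hv with _ | h
        · exact absurd rfl hcv
        · assumption
      have hvv' : (v, v) ∈ S → v ∈ insert c seen ∨ [v, v].Sublist w := by
        intro h
        rcases hvv h with hseen | hsub
        · exact Or.inl (Finset.mem_insert_of_mem hseen)
        · right
          cases hsub with
          | cons _ h => exact h
          | cons_cons _ h => exact absurd rfl hcv
      have := ih (insert c seen) v hvw hvv'
      simp [relabel, this]

lemma mainC {σ : Type*} [DecidableEq σ] (S : Finset (σ × σ)) :
    ∀ (w : List σ) (seen : Finset σ) (u v : σ), [u, v].Sublist w →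
      ((u, u) ∈ S → u ∉ seen) →
      ((v, v) ∈ S → v ∈ seen ∨ [v, v].Sublist w) →
      [distinctify S false u, distinctify S true v].Sublist (relabel S w seen) := by
  intro w
  induction w with
  | nil => intro seen u v h; simp at h
  | cons c w ih =>
    intro seen u v huv hu hv
    by_cases hcu : c = u
    · subst hcu
      -- head is f₁ c
      have hhead : (if (c, c) ∈ S then Sum.inr (decide (c ∈ seen), c) else Sum.inl c)
          = distinctify S false c := by
        by_cases hC : (c, c) ∈ S
        · simp [distinctify, hC, hu hC]
        · simp [distinctify, hC]
      have hvw : v ∈ w := by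
        cases huv with
        | cons _ h => exact h.subset (by simp)
        | cons_cons _ h => exact h.subset (by simp)
      have hv' : (v, v) ∈ S → v ∈ insert c seen ∨ [v, v].Sublist w := by
        intro h
        rcases hv h with hseen | hsub
        · exact Or.inl (Finset.mem_insert_of_mem hseen)
        · by_cases hvc : v = c
          · subst hvc; exact Or.inl (Finset.mem_insert_self v seen)
          · right
            cases hsub with
            | cons _ h => exact h
            | cons_cons _ h => exact absurd rfl hvc
      have htail := memB S w (insert c seen) v hvw hv'
      rw [relabel, hhead]
      exact (List.singleton_sublist.mpr htail).cons₂ _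
    · have huv' : [u, v].Sublist w := by
        cases huv with
        | cons _ h => exact h
        | cons_cons _ h => exact absurd rfl hcu
      have hu' : (u, u) ∈ S → u ∉ insert c seen := by
        intro h
        simp only [Finset.mem_insert, not_or]
        exact ⟨fun he => hcu he.symm, hu h⟩
      have hv' : (v, v) ∈ S → v ∈ insert c seen ∨ [v, v].Sublist w := by
        intro h
        rcases hv h with hseen | hsub
        · exact Or.inl (Finset.mem_insert_of_mem hseen)
        · by_cases hvc : v = c
          · subst hvc
            left; exact Finset.mem_insert_self v seen
          · right
            cases hsub with
            | cons _ h => exact h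
            | cons_cons _ h => exact absurd rfl hvc
      exact (ih (insert c seen) u v huv' hu' hv').cons _

/-- Let `S` be a finite set of length-two strings (pairs of symbols) and `t` a natural
number, and let `S' = { f₁(u) f₂(v) : uv ∈ S }` where `f₁, f₂` relabel the symbols `c`
with `cc ∈ S` by fresh symbols `c₁, c₂`. Then every string of `S'` consists of two
distinct symbols, and `S` has a common supersequence of length at most `t` if and only if
`S'` has a common supersequence of length at most `t`. -/
theorem twoSCS_iff_twoDistinctSCS {σ : Type*} [DecidableEq σ] (S : Finset (σ × σ))
    (t : ℕ) :
    (∀ p ∈ S, distinctify S false p.1 ≠ distinctify S true p.2) ∧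
      ((∃ w : List σ, w.length ≤ t ∧ ∀ p ∈ S, [p.1, p.2].Sublist w) ↔
        ∃ w' : List (σ ⊕ Bool × σ), w'.length ≤ t ∧
          ∀ p ∈ S, [distinctify S false p.1, distinctify S true p.2].Sublist w') := by
  constructor
  · rintro ⟨u, v⟩ hp
    simp only
    unfold distinctify
    split_ifs with h1 h2 h2 <;> simp
    intro he
    subst he
    exact h1 hp
  · constructor
    · rintro ⟨w, hlen, hsub⟩
      refine ⟨relabel S w ∅, by rw [relabel_length]; exact hlen, ?_⟩
      intro p hp
      apply mainC S w ∅ p.1 p.2 (hsub p hp)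
      · intro _; simp
      · intro h
        right
        exact hsub (p.2, p.2) h
    · rintro ⟨w', hlen, hsub⟩
      refine ⟨w'.map (Sum.elim id Prod.snd), by simpa using hlen, ?_⟩
      intro p hp
      have h := (hsub p hp).map (Sum.elim id Prod.snd)
      have key : ∀ i c, Sum.elim (id : σ → σ) Prod.snd (distinctify S i c) = c := by
        intro i c
        unfold distinctify
        split_ifs <;> rfl
      simpa [key] using h
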